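/- Let P be defined by P(2)=4, P(3)=8, and P(n+1)=P(n)+P(n-1)+2·f(n) for n ≥ 3, where f is the Fibonacci sequence. Then the generating function identity holds: (1 - x - x²)² · Σ_{n≥2} P(n)·xⁿ = 4x² - 4x⁴ - 2x⁵, as an identity of formal power series over ℚ. -/

import Mathlib

open PowerSeries

private def q9 : ℕ → ℚ
  | 0 => 0
  | 1 => 0
  | 2 => 4
  | 3 => 4
  | (n + 4) => 2 * Nat.fib (n + 3)

private lemma step9 (a : ℕ → ℚ) :
    (1 - X - X ^ 2 : ℚ⟦X⟧) * PowerSeries.mk a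
      = PowerSeries.mk (fun n => a n
          - (if 1 ≤ n then a (n - 1) else 0)
          - (if 2 ≤ n then a (n - 2) else 0)) := by
  have h : (1 - X - X ^ 2 : ℚ⟦X⟧) * PowerSeries.mk a
      = PowerSeries.mk a - X * PowerSeries.mk a - X ^ 2 * PowerSeries.mk a := by ring
  rw [h]
  ext n
  simp only [map_sub, coeff_mk]
  rw [show (X : ℚ⟦X⟧) * PowerSeries.mk a = X ^ 1 * PowerSeries.mk a by ring]
  rw [PowerSeries.coeff_X_pow_mul', PowerSeries.coeff_X_pow_mul']
  simp [coeff_mk]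

/-- Generating function for the perimeter-domino counts P(n):
(1 - x - x²)² · Σ_{n≥2} P(n) xⁿ = 4x² - 4x⁴ - 2x⁵ in ℚ[[x]]. -/
theorem stmt_9 (P : ℕ → ℕ) (h2 : P 2 = 4) (h3 : P 3 = 8)
    (hrec : ∀ n, 3 ≤ n → P (n + 1) = P n + P (n - 1) + 2 * Nat.fib n) :
    (1 - PowerSeries.X - PowerSeries.X ^ 2) ^ 2 *
        PowerSeries.mk (fun n => if 2 ≤ n then (P n : ℚ) else 0)
      = 4 * PowerSeries.X ^ 2 - 4 * PowerSeries.X ^ 4 - 2 * PowerSeries.X ^ 5 := by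
  set g : ℚ⟦X⟧ := PowerSeries.mk (fun n => if 2 ≤ n then (P n : ℚ) else 0) with hg
  have step1 : (1 - X - X ^ 2 : ℚ⟦X⟧) * g = PowerSeries.mk q9 := by
    rw [hg, step9]
    ext n
    simp only [coeff_mk]
    match n with
    | 0 => simp [q9]
    | 1 => simp [q9]
    | 2 => simp [q9, h2]
    | 3 => norm_num [q9, h2, h3]
    | (k + 4) =>
      have hr := hrec (k + 3) (by omega)
      simp only [show k + 3 + 1 = k + 4 from rfl, show k + 3 - 1 = k + 2 from rfl] at hr
      simp only [show (2 ≤ k + 4) = True by simp, show (1 ≤ k + 4) = True by simp,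
        if_true, show k + 4 - 1 = k + 3 from rfl, show k + 4 - 2 = k + 2 from rfl]
      rw [if_pos (by omega), if_pos (by omega), hr, q9]
      push_cast
      ring
  have step2 : (1 - X - X ^ 2 : ℚ⟦X⟧) * PowerSeries.mk q9
      = 4 * X ^ 2 - 4 * X ^ 4 - 2 * X ^ 5 := by
    rw [step9]
    ext n
    simp only [coeff_mk, map_sub, map_mul, map_pow]
    rw [show ((4 : ℚ⟦X⟧)) = PowerSeries.C (R := ℚ) 4 from rfl, show ((2 : ℚ⟦X⟧)) = PowerSeries.C (R := ℚ) 2 from rfl]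
    simp only [PowerSeries.coeff_C_mul, PowerSeries.coeff_X_pow]
    match n with
    | 0 => simp [q9]
    | 1 => simp [q9]
    | 2 => norm_num [q9]
    | 3 => norm_num [q9]
    | 4 => norm_num [q9]
    | 5 => norm_num [q9, Nat.fib]
    | 6 => norm_num [q9, show Nat.fib 5 = 5 from rfl, show Nat.fib 4 = 3 from rfl]
    | (k + 7) =>
      have hf : Nat.fib (k + 6) = Nat.fib (k + 5) + Nat.fib (k + 4) := by
        rw [show k + 6 = (k + 4) + 2 from rfl, Nat.fib_add_two]; ring
      simp only [show k + 7 - 1 = k + 6 from rfl, show k + 7 - 2 = k + 5 from rfl]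
      rw [if_pos (by omega), if_pos (by omega), if_neg (by omega), if_neg (by omega),
        if_neg (by omega)]
      show (q9 (k + 3 + 4) - q9 (k + 2 + 4) - q9 (k + 1 + 4) : ℚ) = 4 * 0 - 4 * 0 - 2 * 0
      simp only [q9]
      rw [show k + 3 + 3 = k + 6 from rfl, show k + 2 + 3 = k + 5 from rfl,
        show k + 1 + 3 = k + 4 from rfl, hf]
      push_cast; ring
  calc (1 - X - X ^ 2 : ℚ⟦X⟧) ^ 2 * g
      = (1 - X - X ^ 2 : ℚ⟦X⟧) * ((1 - X - X ^ 2 : ℚ⟦X⟧) * g) := by ring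
    _ = 4 * X ^ 2 - 4 * X ^ 4 - 2 * X ^ 5 := by rw [step1, step2]
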